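/- Fix a ∈ ℝ and b, c ∈ ℂ with b ≠ 0 and c ≠ 0, and let E ∈ ℝ. Then there exists a nonzero ℓ²-solution of the half-line eigenvalue equation if and only if |c| < 1 and E² = a² + |b|². Moreover, when |c| < 1 and E² = a² + |b|², the space Sol(a, b, c, E) is one-dimensional, spanned by the sequence ((a + E)/b)·e₁ + e₄. -/

import Mathlib

noncomputable section

open scoped ComplexConjugate

/-- The on-site matrix `V` of the local model. -/
def Vmat (a : ℝ) (b c : ℂ) : Matrix (Fin 4) (Fin 4) ℂ :=
  !![(a : ℂ), conj c, 0, conj b;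
     c, -(a : ℂ), conj b, 0;
     0, b, (a : ℂ), -c;
     b, 0, -(conj c), -(a : ℂ)]

/-- The hopping matrix `A` of the local model. -/
def Amat : Matrix (Fin 4) (Fin 4) ℂ :=
  !![0, -1, 0, 0;
     0, 0, 0, 0;
     0, 0, 0, 0;
     0, 0, 1, 0]

/-- `ψ : ℕ → (Fin 4 → ℂ)` (with `ψ n` standing for the value at the site `n + 1` of the
half-line `{1, 2, 3, …}`) solves the half-line eigenvalue equation `(H♯ − E)ψ = 0`:
`(V − E·I)ψ(1) + A*ψ(2) = 0` and `Aψ(n) + (V − E·I)ψ(n+1) + A*ψ(n+2) = 0` for all `n ≥ 1`. -/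
def IsSolSeq (a : ℝ) (b c : ℂ) (E : ℝ) (ψ : ℕ → Fin 4 → ℂ) : Prop :=
  (Vmat a b c - (E : ℂ) • 1).mulVec (ψ 0) + (Amat.conjTranspose).mulVec (ψ 1) = 0 ∧
    ∀ n : ℕ,
      Amat.mulVec (ψ n) + (Vmat a b c - (E : ℂ) • 1).mulVec (ψ (n + 1)) +
        (Amat.conjTranspose).mulVec (ψ (n + 2)) = 0

/-- The `ℓ²` condition: `∑_{n ≥ 1} ‖ψ(n)‖² < ∞`. -/
def IsL2Seq (ψ : ℕ → Fin 4 → ℂ) : Prop :=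
  Summable fun n => ∑ i, ‖ψ n i‖ ^ 2

/-- The space `Sol(a, b, c, E)` of `ℓ²`-solutions of the half-line eigenvalue equation. -/
def Sol (a : ℝ) (b c : ℂ) (E : ℝ) : Set (ℕ → Fin 4 → ℂ) :=
  {ψ | IsSolSeq a b c E ψ ∧ IsL2Seq ψ}

/-- The sequence `e₁` with `e₁(n) = (c^{n−1}, 0, 0, 0)` (convention `0⁰ = 1`). -/
def eSeq₁ (c : ℂ) : ℕ → Fin 4 → ℂ := fun n => ![c ^ n, 0, 0, 0]

/-- The sequence `e₄` with `e₄(n) = (0, 0, 0, c^{n−1})` (convention `0⁰ = 1`). -/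
def eSeq₄ (c : ℂ) : ℕ → Fin 4 → ℂ := fun n => ![0, 0, 0, c ^ n]

namespace Stmt13Aux

open Filter

/- ### Generic analysis lemmas -/

lemma aux_pow_tendsto {r x : ℂ} (hr : 1 ≤ ‖r‖)
    (h : Tendsto (fun n : ℕ => r ^ n * x) atTop (nhds 0)) : x = 0 := by
  by_contra hx
  have hnorm : Tendsto (fun n : ℕ => ‖r ^ n * x‖) atTop (nhds 0) := by simpa using h.norm
  have hev : ∀ᶠ n : ℕ in atTop, ‖r ^ n * x‖ < ‖x‖ :=
    hnorm.eventually_lt_const (norm_pos_iff.2 hx)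
  obtain ⟨n, hn⟩ := hev.exists
  have : ‖x‖ ≤ ‖r ^ n * x‖ := by
    rw [norm_mul, norm_pow]
    nlinarith [norm_nonneg x, one_le_pow₀ hr (n := n)]
  linarith

lemma lemA' {r₁ r₂ : ℂ} (hr : 1 ≤ ‖r₁‖) (v : ℕ → ℂ)
    (h1 : v 1 = (r₁ + r₂) * v 0)
    (h2 : ∀ n : ℕ, v (n + 2) = (r₁ + r₂) * v (n + 1) - r₁ * r₂ * v n)
    (hlim : Tendsto v atTop (nhds 0)) : ∀ n, v n = 0 := by
  have key : ∀ n : ℕ, v (n + 1) - r₂ * v n = r₁ ^ (n + 1) * v 0 := by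
    intro n
    induction n with
    | zero => rw [h1]; ring
    | succ n ih =>
      calc v (n + 2) - r₂ * v (n + 1) = r₁ * (v (n + 1) - r₂ * v n) := by rw [h2 n]; ring
      _ = r₁ ^ (n + 2) * v 0 := by rw [ih]; ring
  have hl2 : Tendsto (fun n : ℕ => v (n + 1) - r₂ * v n) atTop (nhds 0) := by
    have := ((hlim.comp (tendsto_add_atTop_nat 1)).sub (hlim.const_mul r₂))
    simpa using this
  have hl3 : Tendsto (fun n : ℕ => r₁ ^ n * (r₁ * v 0)) atTop (nhds 0) := by
    refine (hl2.congr fun n => ?_)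
    rw [key n]; ring
  have hv0 : v 0 = 0 := by
    have := aux_pow_tendsto hr hl3
    rcases mul_eq_zero.1 this with h | h
    · exact absurd h (by rintro rfl; simp at hr; linarith)
    · exact h
  intro n
  induction n with
  | zero => exact hv0
  | succ n ih =>
    have := key n
    rw [ih, hv0] at this
    simpa using this

lemma lemA {c β : ℂ} (hc : c ≠ 0) (v : ℕ → ℂ)
    (h1 : conj c * v 1 = β * v 0)
    (h2 : ∀ n : ℕ, conj c * v (n + 2) = β * v (n + 1) - c * v n)
    (hlim : Tendsto v atTop (nhds 0)) : ∀ n, v n = 0 := by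
  have hcc : (conj c : ℂ) ≠ 0 := by simpa using hc
  set s : ℂ := β / conj c with hs
  set p : ℂ := c / conj c with hp
  obtain ⟨d, hd⟩ := IsAlgClosed.exists_pow_nat_eq (k := ℂ) (s ^ 2 - 4 * p) (n := 2) (by norm_num)
  set r₁ : ℂ := (s + d) / 2 with hr1
  set r₂ : ℂ := (s - d) / 2 with hr2
  have hsum : r₁ + r₂ = s := by rw [hr1, hr2]; ring
  have hprod : r₁ * r₂ = p := by
    rw [hr1, hr2]
    field_simp
    linear_combination -hd
  have hv1 : v 1 = (r₁ + r₂) * v 0 := by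
    rw [hsum, hs]
    field_simp
    linear_combination h1
  have hv2 : ∀ n : ℕ, v (n + 2) = (r₁ + r₂) * v (n + 1) - r₁ * r₂ * v n := by
    intro n
    rw [hsum, hprod, hs, hp]
    field_simp
    linear_combination h2 n
  have hone : ‖r₁‖ * ‖r₂‖ = 1 := by
    rw [← norm_mul, hprod, hp, norm_div, RCLike.norm_conj,
      div_self (norm_ne_zero_iff.2 hc)]
  rcases le_total 1 ‖r₁‖ with h | h
  · exact lemA' h v hv1 hv2 hlim
  · have h2' : 1 ≤ ‖r₂‖ := by
      by_contra hcon
      push_neg at hcon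
      nlinarith [norm_nonneg r₁, norm_nonneg r₂]
    have hv1' : v 1 = (r₂ + r₁) * v 0 := by rw [add_comm r₂ r₁]; exact hv1
    have hv2' : ∀ n : ℕ, v (n + 2) = (r₂ + r₁) * v (n + 1) - r₂ * r₁ * v n := by
      intro n; rw [add_comm r₂ r₁, mul_comm r₂ r₁]; exact hv2 n
    exact lemA' h2' v hv1' hv2' hlim

lemma lemC {c : ℂ} (hc : c ≠ 0) (hc1 : ‖c‖ < 1) (s : ℂ) (t : ℕ → ℂ)
    (h0 : s + conj c * t 0 = 0)
    (hrec : ∀ n : ℕ, t n = s * c ^ (n + 1) + conj c * t (n + 1))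
    (hlim : Tendsto t atTop (nhds 0)) : s = 0 ∧ ∀ n, t n = 0 := by
  have hcc : (conj c : ℂ) ≠ 0 := by simpa using hc
  set q : ℂ := c * conj c with hq
  have hqnorm : ‖q‖ < 1 := by
    rw [hq, norm_mul, RCLike.norm_conj]
    nlinarith [norm_nonneg c]
  have key : ∀ n : ℕ, (conj c) ^ (n + 1) * t n = -s * ∑ k ∈ Finset.range (n + 1), q ^ k := by
    intro n
    induction n with
    | zero =>
      rw [Finset.sum_range_one, pow_zero, mul_one, zero_add, pow_one]
      linear_combination h0
    | succ n ih =>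
      have h := hrec n
      have : (conj c) ^ (n + 2) * t (n + 1) = (conj c) ^ (n + 1) * t n - s * q ^ (n + 1) := by
        rw [hq]
        calc (conj c) ^ (n + 2) * t (n + 1)
            = (conj c) ^ (n + 1) * (t n - s * c ^ (n + 1)) := by rw [h]; ring
          _ = (conj c) ^ (n + 1) * t n - s * (c * conj c) ^ (n + 1) := by rw [mul_pow]; ring
      rw [this, ih, Finset.sum_range_succ (fun k => q ^ k) (n + 1)]
      ring
  have hLHS : Tendsto (fun n : ℕ => (conj c) ^ (n + 1) * t n) atTop (nhds 0) := by
    rw [tendsto_zero_iff_norm_tendsto_zero]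
    have hb : ∀ n : ℕ, ‖(conj c) ^ (n + 1) * t n‖ ≤ ‖t n‖ := by
      intro n
      rw [norm_mul, norm_pow, RCLike.norm_conj]
      have h1 : ‖c‖ ^ (n + 1) ≤ 1 := pow_le_one₀ (norm_nonneg c) hc1.le
      nlinarith [norm_nonneg (t n)]
    have ht : Tendsto (fun n : ℕ => ‖t n‖) atTop (nhds 0) := by
      rw [← tendsto_zero_iff_norm_tendsto_zero]; exact hlim
    exact squeeze_zero (fun n => norm_nonneg _) hb ht
  have hRHS : Tendsto (fun n : ℕ => -s * ∑ k ∈ Finset.range (n + 1), q ^ k) atTop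
      (nhds (-s * (1 - q)⁻¹)) := by
    have hgeo := (hasSum_geometric_of_norm_lt_one hqnorm).tendsto_sum_nat
    exact ((hgeo.comp (tendsto_add_atTop_nat 1)).const_mul (-s))
  have heq : -s * (1 - q)⁻¹ = 0 :=
    (tendsto_nhds_unique (hLHS.congr fun n => key n) hRHS).symm
  have hq1 : (1 : ℂ) - q ≠ 0 := by
    intro hcon
    have : q = 1 := by linear_combination -hcon
    rw [this] at hqnorm; simp at hqnorm
  have hszero : s = 0 := by
    rcases mul_eq_zero.1 heq with h | h
    · simpa using h
    · exact absurd h (inv_ne_zero hq1)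
  refine ⟨hszero, ?_⟩
  intro n
  induction n with
  | zero =>
    rw [hszero] at h0
    have : conj c * t 0 = 0 := by linear_combination h0
    exact (mul_eq_zero.1 this).resolve_left hcc
  | succ n ih =>
    have h := hrec n
    rw [hszero, ih] at h
    have : conj c * t (n + 1) = 0 := by linear_combination -h
    exact (mul_eq_zero.1 this).resolve_left hcc

lemma l2_comp_tendsto {ψ : ℕ → Fin 4 → ℂ} (h : Summable fun n => ∑ i, ‖ψ n i‖ ^ 2) (i : Fin 4) :
    Tendsto (fun n => ψ n i) atTop (nhds 0) := by
  have hsum : Summable fun n => ‖ψ n i‖ ^ 2 := by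
    refine h.of_nonneg_of_le (fun n => by positivity) (fun n => ?_)
    exact Finset.single_le_sum (f := fun j => ‖ψ n j‖ ^ 2) (fun j _ => by positivity)
      (Finset.mem_univ i)
  have h0 : Tendsto (fun n => ‖ψ n i‖ ^ 2) atTop (nhds 0) := hsum.tendsto_atTop_zero
  rw [tendsto_zero_iff_norm_tendsto_zero]
  have := (Real.continuous_sqrt.tendsto 0).comp h0
  simp only [Function.comp_def, Real.sqrt_sq (norm_nonneg _), Real.sqrt_zero] at this
  simpa using this

/- ### Extraction of the scalar equations -/

lemma VE_eq (a : ℝ) (b c : ℂ) (E : ℝ) :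
    Vmat a b c - (E : ℂ) • 1 =
      !![(a : ℂ) - E, conj c, 0, conj b;
         c, -(a : ℂ) - E, conj b, 0;
         0, b, (a : ℂ) - E, -c;
         b, 0, -(conj c), -(a : ℂ) - E] := by
  ext i j
  fin_cases i <;> fin_cases j <;>
    norm_num [Vmat, Matrix.one_apply, Fin.ext_iff]

lemma solseq_iff (a : ℝ) (b c : ℂ) (E : ℝ) (ψ : ℕ → Fin 4 → ℂ) :
    IsSolSeq a b c E ψ ↔
      ((((a:ℂ) - E) * ψ 0 0 + conj c * ψ 0 1 + conj b * ψ 0 3 = 0 ∧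
       c * ψ 0 0 - ((a:ℂ) + E) * ψ 0 1 + conj b * ψ 0 2 - ψ 1 0 = 0 ∧
       b * ψ 0 1 + ((a:ℂ) - E) * ψ 0 2 - c * ψ 0 3 + ψ 1 3 = 0 ∧
       b * ψ 0 0 - conj c * ψ 0 2 - ((a:ℂ) + E) * ψ 0 3 = 0) ∧
      ∀ n : ℕ,
       (ψ n 1 = ((a:ℂ) - E) * ψ (n+1) 0 + conj c * ψ (n+1) 1 + conj b * ψ (n+1) 3 ∧
        ψ (n+2) 0 = c * ψ (n+1) 0 - ((a:ℂ) + E) * ψ (n+1) 1 + conj b * ψ (n+1) 2 ∧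
        ψ (n+2) 3 = -(b * ψ (n+1) 1) - ((a:ℂ) - E) * ψ (n+1) 2 + c * ψ (n+1) 3 ∧
        ψ n 2 = -(b * ψ (n+1) 0) + conj c * ψ (n+1) 2 + ((a:ℂ) + E) * ψ (n+1) 3)) := by
  rw [IsSolSeq, VE_eq]
  constructor
  · rintro ⟨h0, hn⟩
    constructor
    · have e0 := congrFun h0 0
      have e1 := congrFun h0 1
      have e2 := congrFun h0 2
      have e3 := congrFun h0 3
      simp [Amat, Matrix.conjTranspose_apply, Matrix.mulVec, dotProduct,
        Fin.sum_univ_four, Matrix.vecHead, Matrix.vecTail] at e0 e1 e2 e3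
      refine ⟨?_, ?_, ?_, ?_⟩
      · first | linear_combination e0 | linear_combination -e0
      · first | linear_combination e1 | linear_combination -e1
      · first | linear_combination e2 | linear_combination -e2
      · first | linear_combination e3 | linear_combination -e3
    · intro n
      have e0 := congrFun (hn n) 0
      have e1 := congrFun (hn n) 1
      have e2 := congrFun (hn n) 2
      have e3 := congrFun (hn n) 3
      simp [Amat, Matrix.conjTranspose_apply, Matrix.mulVec, dotProduct,
        Fin.sum_univ_four, Matrix.vecHead, Matrix.vecTail] at e0 e1 e2 e3
      refine ⟨?_, ?_, ?_, ?_⟩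
      · first | linear_combination e0 | linear_combination -e0
      · first | linear_combination e1 | linear_combination -e1
      · first | linear_combination e2 | linear_combination -e2
      · first | linear_combination e3 | linear_combination -e3
  · rintro ⟨⟨h1, h2, h3, h4⟩, hn⟩
    constructor
    · funext i
      fin_cases i <;>
        simp [Amat, Matrix.conjTranspose_apply, Matrix.mulVec, dotProduct,
          Fin.sum_univ_four, Matrix.vecHead, Matrix.vecTail]
      · first | linear_combination h1 | linear_combination -h1
      · first | linear_combination h2 | linear_combination -h2
      · first | linear_combination h3 | linear_combination -h3
      · first | linear_combination h4 | linear_combination -h4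
    · intro n
      obtain ⟨g1, g2, g3, g4⟩ := hn n
      funext i
      fin_cases i <;>
        simp [Amat, Matrix.conjTranspose_apply, Matrix.mulVec, dotProduct,
          Fin.sum_univ_four, Matrix.vecHead, Matrix.vecTail]
      · first | linear_combination g1 | linear_combination -g1
      · first | linear_combination g2 | linear_combination -g2
      · first | linear_combination g3 | linear_combination -g3
      · first | linear_combination g4 | linear_combination -g4

end Stmt13Aux

namespace Stmt13Aux
open Filter

lemma mem_sol (a : ℝ) (b c : ℂ) (hb : b ≠ 0) (E : ℝ)
    (hc1 : ‖c‖ < 1) (hE : E ^ 2 = a ^ 2 + ‖b‖ ^ 2) (z : ℂ) :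
    z • ((((a : ℂ) + (E : ℂ)) / b) • eSeq₁ c + eSeq₄ c) ∈ Sol a b c E := by
  set l : ℂ := ((a : ℂ) + (E : ℂ)) / b with hl
  set φ : ℕ → Fin 4 → ℂ := z • (l • eSeq₁ c + eSeq₄ c) with hφ
  have hbb : conj b * b = ((‖b‖ ^ 2 : ℝ) : ℂ) := by
    rw [← Complex.normSq_eq_conj_mul_self]
    norm_cast
    rw [Complex.normSq_eq_norm_sq]
  have hEc : ((E : ℂ)) ^ 2 = ((a : ℂ)) ^ 2 + ((‖b‖ ^ 2 : ℝ) : ℂ) := by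
    exact_mod_cast congrArg (Complex.ofReal) hE
  have hkey : (((a : ℂ)) ^ 2 - ((E : ℂ)) ^ 2) + conj b * b = 0 := by
    rw [hbb]; linear_combination -hEc
  have hlb : l * b = (a : ℂ) + E := div_mul_cancel₀ _ hb
  have key1 : (((a : ℂ)) - E) * (z * l) + conj b * z = 0 := by
    have h : b * ((((a : ℂ)) - E) * (z * l) + conj b * z) = 0 := by
      linear_combination z * (((a : ℂ)) - E) * hlb + z * hkey
    exact (mul_eq_zero.1 h).resolve_left hb
  have c0 : ∀ n, φ n 0 = z * l * c ^ n := by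
    intro n; simp [hφ, eSeq₁, eSeq₄]; ring
  have c1 : ∀ n, φ n 1 = 0 := by intro n; simp [hφ, eSeq₁, eSeq₄]
  have c2 : ∀ n, φ n 2 = 0 := by intro n; simp [hφ, eSeq₁, eSeq₄]
  have c3 : ∀ n, φ n 3 = z * c ^ n := by intro n; simp [hφ, eSeq₁, eSeq₄]
  constructor
  · rw [solseq_iff]
    refine ⟨⟨?_, ?_, ?_, ?_⟩, fun n => ⟨?_, ?_, ?_, ?_⟩⟩
    · rw [c0 0, c1 0, c3 0, pow_zero]
      first | linear_combination key1 | linear_combination -key1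
    · rw [c0 0, c1 0, c2 0, c0 1]; ring
    · rw [c1 0, c2 0, c3 0, c3 1]; ring
    · rw [c0 0, c2 0, c3 0, pow_zero]
      first | linear_combination z * hlb | linear_combination -(z * hlb)
    · rw [c1 n, c0 (n+1), c1 (n+1), c3 (n+1)]
      first | linear_combination (c ^ (n+1)) * key1 | linear_combination -((c ^ (n+1)) * key1)
    · rw [c0 (n+2), c0 (n+1), c1 (n+1), c2 (n+1)]; ring
    · rw [c3 (n+2), c1 (n+1), c2 (n+1), c3 (n+1)]; ring
    · rw [c2 n, c0 (n+1), c2 (n+1), c3 (n+1)]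
      first | linear_combination (z * c ^ (n+1)) * hlb | linear_combination -((z * c ^ (n+1)) * hlb)
  · have hsum : ∀ n : ℕ, ∑ i, ‖φ n i‖ ^ 2 = (‖z * l‖ ^ 2 + ‖z‖ ^ 2) * (‖c‖ ^ 2) ^ n := by
      intro n
      rw [Fin.sum_univ_four, c0 n, c1 n, c2 n, c3 n]
      simp [norm_mul, norm_pow]
      ring
    have hgeo : Summable fun n : ℕ => (‖z * l‖ ^ 2 + ‖z‖ ^ 2) * (‖c‖ ^ 2) ^ n := by
      refine Summable.mul_left _ (summable_geometric_of_lt_one (by positivity) ?_)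
      nlinarith [norm_nonneg c]
    exact hgeo.congr (fun n => (hsum n).symm)

end Stmt13Aux

namespace Stmt13Aux
open Filter

lemma main_struct (a : ℝ) (b c : ℂ) (hb : b ≠ 0) (hc : c ≠ 0) (E : ℝ)
    (ψ : ℕ → Fin 4 → ℂ) (hsol : IsSolSeq a b c E ψ) (hl2 : IsL2Seq ψ) :
    (¬(‖c‖ < 1 ∧ E ^ 2 = a ^ 2 + ‖b‖ ^ 2) → ψ = 0) ∧
    (‖c‖ < 1 → E ^ 2 = a ^ 2 + ‖b‖ ^ 2 →
      ∃ z : ℂ, ψ = z • ((((a : ℂ) + (E : ℂ)) / b) • eSeq₁ c + eSeq₄ c)) := by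
  have hcc : (conj c : ℂ) ≠ 0 := by simpa using hc
  obtain ⟨⟨hA0, hB0, hC0, hD0⟩, hrec⟩ := (solseq_iff a b c E ψ).1 hsol
  have hA : ∀ n, ψ n 1 = ((a:ℂ) - E) * ψ (n+1) 0 + conj c * ψ (n+1) 1 + conj b * ψ (n+1) 3 :=
    fun n => (hrec n).1
  have hD : ∀ n, ψ n 2 = -(b * ψ (n+1) 0) + conj c * ψ (n+1) 2 + ((a:ℂ) + E) * ψ (n+1) 3 :=
    fun n => (hrec n).2.2.2
  have hB : ∀ n, ψ (n+1) 0 = c * ψ n 0 - ((a:ℂ) + E) * ψ n 1 + conj b * ψ n 2 := by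
    intro n
    cases n with
    | zero => first | linear_combination hB0 | linear_combination -hB0
    | succ m => exact (hrec m).2.1
  have hC : ∀ n, ψ (n+1) 3 = -(b * ψ n 1) - ((a:ℂ) - E) * ψ n 2 + c * ψ n 3 := by
    intro n
    cases n with
    | zero => first | linear_combination hC0 | linear_combination -hC0
    | succ m => exact (hrec m).2.2.1
  have ht0 := l2_comp_tendsto hl2 0
  have ht1 := l2_comp_tendsto hl2 1
  have ht2 := l2_comp_tendsto hl2 2
  have ht3 := l2_comp_tendsto hl2 3
  have hbb : conj b * b = ((‖b‖ ^ 2 : ℝ) : ℂ) := by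
    rw [← Complex.normSq_eq_conj_mul_self]
    norm_cast
    rw [Complex.normSq_eq_norm_sq]
  have hδiff : ((E:ℂ) ^ 2 - (a:ℂ) ^ 2 - conj b * b = 0) ↔ E ^ 2 = a ^ 2 + ‖b‖ ^ 2 := by
    rw [hbb]
    constructor
    · intro h
      have h2 : (((E ^ 2 - a ^ 2 - ‖b‖ ^ 2 : ℝ)) : ℂ) = 0 := by
        push_cast at h ⊢; linear_combination h
      have := Complex.ofReal_eq_zero.1 h2
      linarith
    · intro h
      have : ((E ^ 2 : ℝ) : ℂ) = ((a ^ 2 + ‖b‖ ^ 2 : ℝ) : ℂ) := by exact_mod_cast congrArg Complex.ofReal h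
      push_cast at this ⊢
      linear_combination this
  by_cases hδ0 : (E:ℂ) ^ 2 - (a:ℂ) ^ 2 - conj b * b = 0
  · -- δ = 0 case
    have hm1 : ∀ n, -(((a:ℂ) + E) * ψ n 1) + conj b * ψ n 2 = 0 := by
      have base : conj c * (-(((a:ℂ) + E) * ψ 0 1) + conj b * ψ 0 2) = 0 := by
        linear_combination -((a:ℂ) + E) * hA0 - conj b * hD0 - ψ 0 0 * hδ0
      have step : ∀ n, conj c * (-(((a:ℂ) + E) * ψ (n+1) 1) + conj b * ψ (n+1) 2)
          = -(((a:ℂ) + E) * ψ n 1) + conj b * ψ n 2 := by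
        intro n
        linear_combination ((a:ℂ) + E) * hA n - conj b * hD n - ψ (n+1) 0 * hδ0
      intro n
      induction n with
      | zero => exact (mul_eq_zero.1 base).resolve_left hcc
      | succ m ih =>
        have h := step m
        rw [ih] at h
        exact (mul_eq_zero.1 h).resolve_left hcc
    have hm2 : ∀ n, -(b * ψ n 1) - ((a:ℂ) - E) * ψ n 2 = 0 := by
      have base : conj c * (-(b * ψ 0 1) - ((a:ℂ) - E) * ψ 0 2) = 0 := by
        linear_combination -b * hA0 + ((a:ℂ) - E) * hD0 - ψ 0 3 * hδ0
      have step : ∀ n, conj c * (-(b * ψ (n+1) 1) - ((a:ℂ) - E) * ψ (n+1) 2)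
          = -(b * ψ n 1) - ((a:ℂ) - E) * ψ n 2 := by
        intro n
        linear_combination b * hA n + ((a:ℂ) - E) * hD n - ψ (n+1) 3 * hδ0
      intro n
      induction n with
      | zero => exact (mul_eq_zero.1 base).resolve_left hcc
      | succ m ih =>
        have h := step m
        rw [ih] at h
        exact (mul_eq_zero.1 h).resolve_left hcc
    have hx1 : ∀ n, ψ (n+1) 0 = c * ψ n 0 := fun n => by linear_combination hB n + hm1 n
    have hw1 : ∀ n, ψ (n+1) 3 = c * ψ n 3 := fun n => by linear_combination hC n + hm2 n
    have hxn : ∀ n, ψ n 0 = c ^ n * ψ 0 0 := by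
      intro n
      induction n with
      | zero => simp
      | succ m ih => rw [hx1 m, ih]; ring
    have hwn : ∀ n, ψ n 3 = c ^ n * ψ 0 3 := by
      intro n
      induction n with
      | zero => simp
      | succ m ih => rw [hw1 m, ih]; ring
    constructor
    · -- no nonzero solution when ¬(‖c‖<1 ∧ ...)
      intro hnot
      have hE' : E ^ 2 = a ^ 2 + ‖b‖ ^ 2 := hδiff.1 hδ0
      have hge : 1 ≤ ‖c‖ := by
        by_contra h
        push_neg at h
        exact hnot ⟨h, hE'⟩
      have hx0 : ψ 0 0 = 0 := aux_pow_tendsto hge (ht0.congr hxn)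
      have hw0 : ψ 0 3 = 0 := aux_pow_tendsto hge (ht3.congr hwn)
      have hx : ∀ n, ψ n 0 = 0 := fun n => by rw [hxn n, hx0, mul_zero]
      have hw : ∀ n, ψ n 3 = 0 := fun n => by rw [hwn n, hw0, mul_zero]
      have hy : ∀ n, ψ n 1 = 0 := by
        intro n
        induction n with
        | zero =>
          have h : conj c * ψ 0 1 = 0 := by
            linear_combination hA0 - ((a:ℂ) - E) * hx 0 - conj b * hw 0
          exact (mul_eq_zero.1 h).resolve_left hcc
        | succ m ih =>
          have h : conj c * ψ (m+1) 1 = 0 := by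
            linear_combination -hA m + ih - ((a:ℂ) - E) * hx (m+1) - conj b * hw (m+1)
          exact (mul_eq_zero.1 h).resolve_left hcc
      have hz : ∀ n, ψ n 2 = 0 := by
        intro n
        induction n with
        | zero =>
          have h : conj c * ψ 0 2 = 0 := by
            linear_combination -hD0 + b * hx 0 - ((a:ℂ) + E) * hw 0
          exact (mul_eq_zero.1 h).resolve_left hcc
        | succ m ih =>
          have h : conj c * ψ (m+1) 2 = 0 := by
            linear_combination -hD m + ih + b * hx (m+1) - ((a:ℂ) + E) * hw (m+1)
          exact (mul_eq_zero.1 h).resolve_left hcc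
      funext n i
      fin_cases i
      · exact hx n
      · exact hy n
      · exact hz n
      · exact hw n
    · -- span representation when ‖c‖ < 1
      intro hclt hE'
      have hy := lemC hc hclt (((a:ℂ) - E) * ψ 0 0 + conj b * ψ 0 3) (fun n => ψ n 1)
        (by linear_combination hA0)
        (by
          intro n
          linear_combination hA n + ((a:ℂ) - E) * hxn (n+1) + conj b * hwn (n+1))
        ht1
      obtain ⟨hP0, hyz⟩ := hy
      have hz := lemC hc hclt (-(b * ψ 0 0) + ((a:ℂ) + E) * ψ 0 3) (fun n => ψ n 2)
        (by linear_combination -hD0)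
        (by
          intro n
          linear_combination hD n - b * hxn (n+1) + ((a:ℂ) + E) * hwn (n+1))
        ht2
      obtain ⟨hR0, hzz⟩ := hz
      refine ⟨ψ 0 3, ?_⟩
      have hx0 : ψ 0 0 = (((a:ℂ) + E) / b) * ψ 0 3 := by
        have h : b * ψ 0 0 = ((a:ℂ) + E) * ψ 0 3 := by linear_combination -hR0
        field_simp
        first | linear_combination h | linear_combination -h | linear_combination b * h
      funext n i
      fin_cases i
      · show ψ n 0 = _
        rw [hxn n, hx0]
        simp [eSeq₁, eSeq₄]
        ring
      · show ψ n 1 = _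
        simp [eSeq₁, eSeq₄]
        exact hyz n
      · show ψ n 2 = _
        simp [eSeq₁, eSeq₄]
        exact hzz n
      · show ψ n 3 = _
        rw [hwn n]
        simp [eSeq₁, eSeq₄]
        ring
  · -- δ ≠ 0 case
    have hy1 : conj c * ψ 1 1
        = (1 + c * conj c - ((E:ℂ) ^ 2 - (a:ℂ) ^ 2 - conj b * b)) * ψ 0 1 := by
      linear_combination (-1 : ℂ) * hA 0 - ((a:ℂ) - E) * hB 0 - conj b * hC 0 - c * hA0
    have hy2 : ∀ n, conj c * ψ (n+2) 1
        = (1 + c * conj c - ((E:ℂ) ^ 2 - (a:ℂ) ^ 2 - conj b * b)) * ψ (n+1) 1 - c * ψ n 1 := by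
      intro n
      linear_combination (-1 : ℂ) * hA (n+1) - ((a:ℂ) - E) * hB (n+1) - conj b * hC (n+1) + c * hA n
    have hy := lemA hc (fun n => ψ n 1) hy1 hy2 ht1
    have hz1 : conj c * ψ 1 2
        = (1 + c * conj c - ((E:ℂ) ^ 2 - (a:ℂ) ^ 2 - conj b * b)) * ψ 0 2 := by
      linear_combination (-1 : ℂ) * hD 0 + b * hB 0 - ((a:ℂ) + E) * hC 0 + c * hD0
    have hz2 : ∀ n, conj c * ψ (n+2) 2
        = (1 + c * conj c - ((E:ℂ) ^ 2 - (a:ℂ) ^ 2 - conj b * b)) * ψ (n+1) 2 - c * ψ n 2 := by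
      intro n
      linear_combination (-1 : ℂ) * hD (n+1) + b * hB (n+1) - ((a:ℂ) + E) * hC (n+1) + c * hD n
    have hz := lemA hc (fun n => ψ n 2) hz1 hz2 ht2
    have hP : ∀ n, ((a:ℂ) - E) * ψ n 0 + conj b * ψ n 3 = 0 := by
      intro n
      cases n with
      | zero => linear_combination hA0 - conj c * hy 0
      | succ m => linear_combination -hA m + hy m - conj c * hy (m+1)
    have hR : ∀ n, -(b * ψ n 0) + ((a:ℂ) + E) * ψ n 3 = 0 := by
      intro n
      cases n with
      | zero => linear_combination -hD0 - conj c * hz 0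
      | succ m => linear_combination -hD m + hz m - conj c * hz (m+1)
    have hx : ∀ n, ψ n 0 = 0 := by
      intro n
      have h : ((E:ℂ) ^ 2 - (a:ℂ) ^ 2 - conj b * b) * ψ n 0 = 0 := by
        linear_combination -((a:ℂ) + E) * hP n + conj b * hR n
      exact (mul_eq_zero.1 h).resolve_left hδ0
    have hw : ∀ n, ψ n 3 = 0 := by
      intro n
      have h : ((E:ℂ) ^ 2 - (a:ℂ) ^ 2 - conj b * b) * ψ n 3 = 0 := by
        linear_combination -b * hP n - ((a:ℂ) - E) * hR n
      exact (mul_eq_zero.1 h).resolve_left hδ0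
    have hzero : ψ = 0 := by
      funext n i
      fin_cases i
      · exact hx n
      · exact hy n
      · exact hz n
      · exact hw n
    exact ⟨fun _ => hzero, fun hclt hE' => absurd (hδiff.2 hE') hδ0⟩

end Stmt13Aux


/-- Fix `a ∈ ℝ` and `b, c ∈ ℂ` with `b ≠ 0` and `c ≠ 0`, and let `E ∈ ℝ`. Then there
exists a nonzero ℓ²-solution of the half-line eigenvalue equation iff `|c| < 1` and
`E² = a² + |b|²`. Moreover, in that case `Sol(a,b,c,E)` is one-dimensional, spanned by
`((a+E)/b)·e₁ + e₄`. -/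
theorem stmt13 (a : ℝ) (b c : ℂ) (hb : b ≠ 0) (hc : c ≠ 0) (E : ℝ) :
    ((∃ ψ ∈ Sol a b c E, ψ ≠ 0) ↔ (‖c‖ < 1 ∧ E ^ 2 = a ^ 2 + ‖b‖ ^ 2)) ∧
    (‖c‖ < 1 → E ^ 2 = a ^ 2 + ‖b‖ ^ 2 →
      Sol a b c E =
        {ψ | ∃ z : ℂ, ψ = z • ((((a : ℂ) + (E : ℂ)) / b) • eSeq₁ c + eSeq₄ c)}) := by
  constructor
  · constructor
    · rintro ⟨ψ, ⟨hsol, hl2⟩, hne⟩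
      by_contra hcon
      exact hne ((Stmt13Aux.main_struct a b c hb hc E ψ hsol hl2).1 hcon)
    · rintro ⟨hc1, hE⟩
      refine ⟨(1 : ℂ) • ((((a : ℂ) + (E : ℂ)) / b) • eSeq₁ c + eSeq₄ c),
        Stmt13Aux.mem_sol a b c hb E hc1 hE 1, ?_⟩
      intro h0
      have := congrFun (congrFun h0 0) 3
      simp [eSeq₁, eSeq₄] at this
  · intro hc1 hE
    ext ψ
    simp only [Sol, Set.mem_setOf_eq]
    constructor
    · rintro ⟨hsol, hl2⟩
      exact (Stmt13Aux.main_struct a b c hb hc E ψ hsol hl2).2 hc1 hE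
    · rintro ⟨z, rfl⟩
      exact Stmt13Aux.mem_sol a b c hb E hc1 hE z
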